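/- arXiv:1412.3178 — 7 statements merged into one kernel-verified Lean document; each statement's English description precedes it below -/
import Mathlib

section
/- Let ν be a strictly convex norm on ℝⁿ and let C ⊆ ℝⁿ be a nonempty closed set. If x ∉ C and the function x ↦ dist_ν(x, C) is (Fréchet) differentiable at x, then x has a unique best ν-approximation in C. -/
/-- The distance from `x` to the set `C` measured in the norm `ν`. -/
noncomputable def distNu {E : Type*} [AddCommGroup E] (ν : E → ℝ) (C : Set E) (x : E) : ℝ :=
  sInf ((fun y => ν (x - y)) '' C)

open Set Filter Topology

section auxNu
variable {n : ℕ} {ν : EuclideanSpace ℝ (Fin n) → ℝ}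

lemma nu_zero' (hν_smul : ∀ (c : ℝ) (x), ν (c • x) = |c| * ν x) : ν 0 = 0 := by
  have := hν_smul 0 0
  simpa using this

lemma nu_neg' (hν_smul : ∀ (c : ℝ) (x), ν (c • x) = |c| * ν x) (v) : ν (-v) = ν v := by
  have := hν_smul (-1) v
  simpa using this

lemma nu_nonneg' (hν_smul : ∀ (c : ℝ) (x), ν (c • x) = |c| * ν x)
    (hν_add : ∀ x y, ν (x + y) ≤ ν x + ν y) (v) : 0 ≤ ν v := by
  have h := hν_add v (-v)
  rw [add_neg_cancel, nu_zero' hν_smul, nu_neg' hν_smul] at h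
  linarith

lemma nu_sum_le' (hν_smul : ∀ (c : ℝ) (x), ν (c • x) = |c| * ν x)
    (hν_add : ∀ x y, ν (x + y) ≤ ν x + ν y) {ι : Type*} (s : Finset ι)
    (f : ι → EuclideanSpace ℝ (Fin n)) :
    ν (∑ i ∈ s, f i) ≤ ∑ i ∈ s, ν (f i) := by
  classical
  induction s using Finset.cons_induction with
  | empty => simp [nu_zero' hν_smul]
  | cons a s ha ih =>
      rw [Finset.sum_cons, Finset.sum_cons]
      exact (hν_add _ _).trans (by linarith)

lemma nu_continuous' (hν_smul : ∀ (c : ℝ) (x), ν (c • x) = |c| * ν x)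
    (hν_add : ∀ x y, ν (x + y) ≤ ν x + ν y) : Continuous ν := by
  obtain ⟨M, hM⟩ : ∃ M : ℝ, ∀ v, ν v ≤ M * ‖v‖ := by
    refine ⟨∑ i, ν (EuclideanSpace.single i (1:ℝ)), fun v => ?_⟩
    have hdec : v = ∑ i, v i • EuclideanSpace.single i (1:ℝ) := by
      ext j
      rw [WithLp.ofLp_sum, Fintype.sum_apply]
      simp [EuclideanSpace.single_apply, mul_comm]
    calc ν v = ν (∑ i, v i • EuclideanSpace.single i (1:ℝ)) := by rw [← hdec]
      _ ≤ ∑ i, ν (v i • EuclideanSpace.single i (1:ℝ)) :=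
          nu_sum_le' hν_smul hν_add _ _
      _ ≤ ∑ i, ν (EuclideanSpace.single i (1:ℝ)) * ‖v‖ := by
          refine Finset.sum_le_sum fun i _ => ?_
          rw [hν_smul]
          have h1 : |v i| ≤ ‖v‖ := by
            rw [EuclideanSpace.norm_eq]
            calc |v i| = Real.sqrt (‖v i‖^2) := by
                  rw [Real.sqrt_sq (norm_nonneg _)]; exact (Real.norm_eq_abs _).symm
              _ ≤ _ := Real.sqrt_le_sqrt (Finset.single_le_sum
                  (f := fun j => ‖v j‖^2) (fun j _ => sq_nonneg _) (Finset.mem_univ i))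
          have h2 := nu_nonneg' hν_smul hν_add (EuclideanSpace.single i (1:ℝ))
          calc |v i| * ν (EuclideanSpace.single i 1)
              ≤ ‖v‖ * ν (EuclideanSpace.single i 1) :=
                mul_le_mul_of_nonneg_right h1 h2
            _ = _ := mul_comm _ _
      _ = (∑ i, ν (EuclideanSpace.single i (1:ℝ))) * ‖v‖ := by rw [Finset.sum_mul]
  have hlip : ∀ a b, |ν a - ν b| ≤ M * ‖a - b‖ := by
    intro a b
    have h1 : ν a ≤ ν (a - b) + ν b := by
      have := hν_add (a - b) b; simpa using this
    have h2 : ν b ≤ ν (a - b) + ν a := by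
      have := hν_add (b - a) a
      rw [sub_add_cancel] at this
      calc ν b ≤ ν (b - a) + ν a := this
        _ = ν (a - b) + ν a := by rw [← neg_sub a b, nu_neg' hν_smul]
    have h3 := hM (a - b)
    rw [abs_sub_le_iff]
    constructor <;> linarith
  rw [Metric.continuous_iff]
  intro b ε hε
  rcases le_or_gt M 0 with hM0 | hM0
  · refine ⟨1, one_pos, fun a _ => ?_⟩
    have := hlip a b
    have : |ν a - ν b| ≤ 0 := this.trans (mul_nonpos_of_nonpos_of_nonneg hM0 (norm_nonneg _))
    rw [Real.dist_eq]
    linarith [abs_nonneg (ν a - ν b)]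
  · refine ⟨ε / M, div_pos hε hM0, fun a ha => ?_⟩
    rw [Real.dist_eq]
    calc |ν a - ν b| ≤ M * ‖a - b‖ := hlip a b
      _ = M * dist a b := by rw [dist_eq_norm]
      _ < M * (ε / M) := by exact mul_lt_mul_of_pos_left ha hM0
      _ = ε := by field_simp

lemma nu_lower' (hnn : ∀ v, 0 ≤ ν v) (hcont : Continuous ν)
    (hν_smul : ∀ (c : ℝ) (x), ν (c • x) = |c| * ν x)
    (hν_eq : ∀ x, ν x = 0 ↔ x = 0) :
    ∃ c : ℝ, 0 < c ∧ ∀ v, c * ‖v‖ ≤ ν v := by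
  rcases isEmpty_or_nonempty (Fin n) with he | hne
  · refine ⟨1, one_pos, fun v => ?_⟩
    have hv : v = 0 := by ext j; exact (he.false j).elim
    simp [hv, (hν_eq 0).2 rfl]
  · obtain ⟨i⟩ := hne
    have hsc : IsCompact (Metric.sphere (0 : EuclideanSpace ℝ (Fin n)) 1) :=
      isCompact_sphere _ _
    have hsne : (Metric.sphere (0 : EuclideanSpace ℝ (Fin n)) 1).Nonempty := by
      refine ⟨EuclideanSpace.single i (1:ℝ), ?_⟩
      simp [EuclideanSpace.norm_single]
    obtain ⟨v₀, hv₀mem, hv₀min⟩ := hsc.exists_isMinOn hsne hcont.continuousOn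
    have hv₀ : ‖v₀‖ = 1 := by simpa using hv₀mem
    have hc : 0 < ν v₀ := by
      rcases (hnn v₀).lt_or_eq with h | h
      · exact h
      · exfalso
        have : v₀ = 0 := (hν_eq v₀).1 h.symm
        rw [this] at hv₀; simp at hv₀
    refine ⟨ν v₀, hc, fun v => ?_⟩
    rcases eq_or_ne v 0 with rfl | hv
    · simp [(hν_eq 0).2 rfl]
    · have hnv : (0:ℝ) < ‖v‖ := norm_pos_iff.2 hv
      have hunit : ‖v‖⁻¹ • v ∈ Metric.sphere (0 : EuclideanSpace ℝ (Fin n)) 1 := by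
        simp [norm_smul, abs_of_pos (inv_pos.2 hnv), inv_mul_cancel₀ hnv.ne']
      have h1 : ν v₀ ≤ ν (‖v‖⁻¹ • v) := hv₀min hunit
      have h2 : ν (‖v‖⁻¹ • v) = ‖v‖⁻¹ * ν v := by
        rw [hν_smul, abs_of_pos (inv_pos.2 hnv)]
      rw [h2] at h1
      calc ν v₀ * ‖v‖ ≤ ‖v‖⁻¹ * ν v * ‖v‖ := mul_le_mul_of_nonneg_right h1 hnv.le
        _ = ν v := by field_simp

end auxNu

section auxDist
variable {n : ℕ} {ν : EuclideanSpace ℝ (Fin n) → ℝ} {C : Set (EuclideanSpace ℝ (Fin n))}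

lemma distNu_le (hnn : ∀ v, 0 ≤ ν v) (y : EuclideanSpace ℝ (Fin n)) (hy : y ∈ C) (x) :
    distNu ν C x ≤ ν (x - y) :=
  csInf_le ⟨0, by rintro b ⟨z, hz, rfl⟩; exact hnn _⟩ ⟨y, hy, rfl⟩

lemma distNu_lipschitz (hnn : ∀ v, 0 ≤ ν v) (hCne : C.Nonempty)
    (hν_add : ∀ x y, ν (x + y) ≤ ν x + ν y) (a b : EuclideanSpace ℝ (Fin n)) :
    distNu ν C a ≤ distNu ν C b + ν (a - b) := by
  have key : ∀ z ∈ (fun y => ν (b - y)) '' C, distNu ν C a - ν (a - b) ≤ z := by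
    rintro z ⟨y, hy, rfl⟩
    have h1 : distNu ν C a ≤ ν (a - y) := distNu_le hnn y hy a
    have h2 : ν (a - y) ≤ ν (a - b) + ν (b - y) := by
      have := hν_add (a - b) (b - y)
      rwa [sub_add_sub_cancel] at this
    linarith
  have h3 : distNu ν C a - ν (a - b) ≤ distNu ν C b := le_csInf (hCne.image _) key
  linarith

lemma exists_best (hnn : ∀ v, 0 ≤ ν v) (hcont : Continuous ν) {c : ℝ} (hc : 0 < c)
    (hlow : ∀ v, c * ‖v‖ ≤ ν v) (hCne : C.Nonempty) (hCcl : IsClosed C)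
    (x : EuclideanSpace ℝ (Fin n)) :
    ∃ y ∈ C, ν (x - y) = distNu ν C x := by
  obtain ⟨z, hz⟩ := hCne
  set R := ν (x - z) with hR
  set K := C ∩ {y | ν (x - y) ≤ R} with hK
  have hfc : Continuous fun y => ν (x - y) := hcont.comp (continuous_const.sub continuous_id)
  have hKcl : IsClosed K := hCcl.inter (isClosed_le hfc continuous_const)
  have hKbd : Bornology.IsBounded K := by
    rw [Metric.isBounded_iff_subset_closedBall 0]
    refine ⟨‖x‖ + R / c, fun y hy => ?_⟩
    have h1 : c * ‖x - y‖ ≤ R := (hlow (x - y)).trans hy.2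
    have h2 : ‖x - y‖ ≤ R / c := (le_div_iff₀' hc).2 h1
    have h3 : ‖y‖ ≤ ‖x‖ + ‖x - y‖ := by
      calc ‖y‖ = ‖x - (x - y)‖ := by rw [sub_sub_cancel]
        _ ≤ ‖x‖ + ‖x - y‖ := norm_sub_le _ _
    simp only [Metric.mem_closedBall, dist_zero_right]
    linarith
  have hKcp : IsCompact K := Metric.isCompact_of_isClosed_isBounded hKcl hKbd
  have hKne : K.Nonempty := ⟨z, hz, le_refl R⟩
  obtain ⟨y₀, hy₀K, hy₀min⟩ := hKcp.exists_isMinOn hKne hfc.continuousOn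
  refine ⟨y₀, hy₀K.1, le_antisymm ?_ (distNu_le hnn y₀ hy₀K.1 x)⟩
  refine le_csInf (Set.Nonempty.image _ ⟨z, hz⟩) ?_
  rintro b ⟨y, hy, rfl⟩
  by_cases h : ν (x - y) ≤ R
  · exact hy₀min ⟨hy, h⟩
  · exact hy₀K.2.trans (le_of_not_ge h)

end auxDist

/-- If `ν` is a strictly convex norm on `ℝⁿ`, `C` a nonempty closed set, `x ∉ C`, and
`distNu ν C` is Fréchet differentiable at `x`, then `x` has a unique best `ν`-approximation
in `C`. -/
theorem stmt0 {n : ℕ} (ν : EuclideanSpace ℝ (Fin n) → ℝ)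
    (hν_eq : ∀ x, ν x = 0 ↔ x = 0)
    (hν_smul : ∀ (c : ℝ) (x), ν (c • x) = |c| * ν x)
    (hν_add : ∀ x y, ν (x + y) ≤ ν x + ν y)
    (hν_sc : ∀ x y, x ≠ y → ν x = 1 → ν y = 1 →
      ∀ t : ℝ, 0 < t → t < 1 → ν (t • x + (1 - t) • y) < 1)
    (C : Set (EuclideanSpace ℝ (Fin n))) (hCne : C.Nonempty) (hCcl : IsClosed C)
    (x : EuclideanSpace ℝ (Fin n)) (hx : x ∉ C)
    (hdiff : DifferentiableAt ℝ (distNu ν C) x) :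
    ∃! y, y ∈ C ∧ ν (x - y) = distNu ν C x := by
  have hnn := nu_nonneg' hν_smul hν_add
  have hcont := nu_continuous' hν_smul hν_add
  obtain ⟨c, hc, hlow⟩ := nu_lower' hnn hcont hν_smul hν_eq
  obtain ⟨y₀, hy₀C, hy₀⟩ := exists_best hnn hcont hc hlow hCne hCcl x
  set d := distNu ν C with hd
  set r := d x with hr
  have hrpos : 0 < r := by
    rcases (hnn (x - y₀)).lt_or_eq with h | h
    · exact lt_of_lt_of_eq h hy₀
    · exfalso
      have : x - y₀ = 0 := (hν_eq _).1 h.symm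
      have : x = y₀ := sub_eq_zero.1 this
      exact hx (this ▸ hy₀C)
  set L := fderiv ℝ d x with hL
  have hLd : HasFDerivAt d L x := hdiff.hasFDerivAt
  -- derivative of d along lines
  have hderiv : ∀ v : EuclideanSpace ℝ (Fin n),
      HasDerivAt (fun t : ℝ => d (x + t • v)) (L v) 0 := by
    intro v
    have hline : HasDerivAt (fun t : ℝ => x + t • v) v 0 := by
      simpa using ((hasDerivAt_id (0:ℝ)).smul_const v).const_add x
    have hLd' : HasFDerivAt d L ((fun t : ℝ => x + t • v) 0) := by
      simpa using hLd
    exact hLd'.comp_hasDerivAt 0 hline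
  have hmono : 𝓝[>] (0:ℝ) ≤ 𝓝[≠] (0:ℝ) :=
    nhdsWithin_mono 0 fun t ht => ne_of_gt ht
  -- Claim A : L v ≤ ν v
  have claimA : ∀ v, L v ≤ ν v := by
    intro v
    have hslope := (hasDerivAt_iff_tendsto_slope.1 (hderiv v)).mono_left hmono
    refine le_of_tendsto hslope ?_
    filter_upwards [self_mem_nhdsWithin] with t ht
    replace ht : (0:ℝ) < t := ht
    have h1 : d (x + t • v) ≤ d x + ν (x + t • v - x) :=
      distNu_lipschitz hnn hCne hν_add _ _
    have h2 : ν (x + t • v - x) = t * ν v := by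
      rw [add_sub_cancel_left, hν_smul, abs_of_pos ht]
    have h3 : slope (fun t : ℝ => d (x + t • v)) 0 t
        = (d (x + t • v) - d x) / t := by
      rw [slope_def_field]
      simp
    rw [h3, div_le_iff₀ ht]
    rw [h2] at h1
    linarith [mul_comm (ν v) t]
  -- Claim B : for best approximations, L (y - x) = -r
  have claimB : ∀ y ∈ C, ν (x - y) = r → L (y - x) = -r := by
    intro y hyC hyr
    have heq : ∀ t ∈ Set.Ioc (0:ℝ) 1, d (x + t • (y - x)) = (1 - t) * r := by
      intro t ht
      have hub : d (x + t • (y - x)) ≤ (1 - t) * r := by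
        have h1 : d (x + t • (y - x)) ≤ ν (x + t • (y - x) - y) :=
          distNu_le hnn y hyC _
        have h2 : x + t • (y - x) - y = (1 - t) • (x - y) := by module
        rw [h2, hν_smul, abs_of_nonneg (by linarith [ht.2]), hyr] at h1
        exact h1
      have hlb : (1 - t) * r ≤ d (x + t • (y - x)) := by
        have h1 : d x ≤ d (x + t • (y - x)) + ν (x - (x + t • (y - x))) :=
          distNu_lipschitz hnn hCne hν_add _ _
        have h2 : x - (x + t • (y - x)) = t • (x - y) := by module
        rw [h2, hν_smul, abs_of_pos ht.1, hyr] at h1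
        have : d x = r := hr.symm
        nlinarith
      linarith
    have hslope := (hasDerivAt_iff_tendsto_slope.1 (hderiv (y - x))).mono_left hmono
    have hconst : Filter.Tendsto (slope (fun t : ℝ => d (x + t • (y - x))) 0)
        (𝓝[>] (0:ℝ)) (𝓝 (-r)) := by
      refine Filter.Tendsto.congr' ?_ tendsto_const_nhds
      filter_upwards [Ioc_mem_nhdsGT one_pos] with t ht
      rw [slope_def_field, heq t ht]
      have h0 : d (x + (0:ℝ) • (y - x)) = r := by simp [hr]
      rw [h0]
      have ht0 : t ≠ 0 := ne_of_gt ht.1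
      field_simp
      ring
    exact tendsto_nhds_unique hslope hconst
  -- assemble
  refine ⟨y₀, ⟨hy₀C, hy₀⟩, ?_⟩
  rintro y₁ ⟨hy₁C, hy₁⟩
  by_contra hne
  have hu : ν (x - y₁) = r := hy₁
  have hw : ν (x - y₀) = r := hy₀
  have hLu : L (x - y₁) = r := by
    have := claimB y₁ hy₁C hu
    have h2 : x - y₁ = -(y₁ - x) := by module
    rw [h2, map_neg, this]; ring
  have hLw : L (x - y₀) = r := by
    have := claimB y₀ hy₀C hw
    have h2 : x - y₀ = -(y₀ - x) := by module
    rw [h2, map_neg, this]; ring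
  have hune : r⁻¹ • (x - y₁) ≠ r⁻¹ • (x - y₀) := by
    intro h
    apply hne
    have h2 : x - y₁ = x - y₀ :=
      smul_right_injective (EuclideanSpace ℝ (Fin n)) (inv_ne_zero hrpos.ne') h
    rwa [sub_right_inj] at h2
  have hn1 : ν (r⁻¹ • (x - y₁)) = 1 := by
    rw [hν_smul, hu, abs_of_pos (inv_pos.2 hrpos), inv_mul_cancel₀ hrpos.ne']
  have hn0 : ν (r⁻¹ • (x - y₀)) = 1 := by
    rw [hν_smul, hw, abs_of_pos (inv_pos.2 hrpos), inv_mul_cancel₀ hrpos.ne']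
  have hsc := hν_sc _ _ hune hn1 hn0 (1/2) (by norm_num) (by norm_num)
  have hcomb : (1/2 : ℝ) • (r⁻¹ • (x - y₁)) + (1 - 1/2 : ℝ) • (r⁻¹ • (x - y₀))
      = ((2 * r)⁻¹) • ((x - y₁) + (x - y₀)) := by
    have h2 : (2 * r)⁻¹ = (1/2 : ℝ) * r⁻¹ := by rw [mul_inv]; ring
    rw [h2]
    module
  rw [hcomb, hν_smul] at hsc
  have hinv : |(2 * r)⁻¹| = (2 * r)⁻¹ := abs_of_pos (by positivity)
  rw [hinv] at hsc
  have hlt : ν ((x - y₁) + (x - y₀)) < 2 * r := by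
    have h2r : (0:ℝ) < 2 * r := by linarith
    calc ν ((x - y₁) + (x - y₀)) = (2*r) * ((2*r)⁻¹ * ν ((x - y₁) + (x - y₀))) := by
          field_simp
      _ < (2*r) * 1 := by exact mul_lt_mul_of_pos_left hsc h2r
      _ = 2 * r := by ring
  have hge : 2 * r ≤ ν ((x - y₁) + (x - y₀)) := by
    have := claimA ((x - y₁) + (x - y₀))
    rw [map_add, hLu, hLw] at this
    linarith
  linarith
end

section
/- Let ν be a strictly convex norm on ℝⁿ, let C ⊆ ℝⁿ be a nonempty closed set, and let a > 1 be a real number. Then at each point x ∈ ℝⁿ at which the function x ↦ dist_ν(x, C)^a is (Fréchet) differentiable, the best ν-approximation of x in C is unique. -/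
open Filter Topology Set

private lemma abs_apply_le_norm {n : ℕ} (z : EuclideanSpace ℝ (Fin n)) (i : Fin n) :
    |z i| ≤ ‖z‖ := by
  rw [EuclideanSpace.norm_eq]
  calc |z i| = Real.sqrt (‖z i‖ ^ 2) := by
        rw [Real.norm_eq_abs, Real.sqrt_sq_eq_abs, abs_abs]
    _ ≤ Real.sqrt (∑ j, ‖z j‖ ^ 2) := by
        apply Real.sqrt_le_sqrt
        exact Finset.single_le_sum (f := fun j => ‖z j‖ ^ 2)
          (fun j _ => by positivity) (Finset.mem_univ i)

/-- If `ν` is a strictly convex norm on `ℝⁿ`, `C` a nonempty closed set, `a > 1`, and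
`x ↦ distNu ν C x ^ a` is Fréchet differentiable at `x`, then `x` has a unique best
`ν`-approximation in `C`. -/
theorem stmt1 {n : ℕ} (ν : EuclideanSpace ℝ (Fin n) → ℝ)
    (hν_eq : ∀ x, ν x = 0 ↔ x = 0)
    (hν_smul : ∀ (c : ℝ) (x), ν (c • x) = |c| * ν x)
    (hν_add : ∀ x y, ν (x + y) ≤ ν x + ν y)
    (hν_sc : ∀ x y, x ≠ y → ν x = 1 → ν y = 1 →
      ∀ t : ℝ, 0 < t → t < 1 → ν (t • x + (1 - t) • y) < 1)
    (C : Set (EuclideanSpace ℝ (Fin n))) (hCne : C.Nonempty) (hCcl : IsClosed C)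
    (a : ℝ) (ha : 1 < a)
    (x : EuclideanSpace ℝ (Fin n))
    (hdiff : DifferentiableAt ℝ (fun z => distNu ν C z ^ a) x) :
    ∃! y, y ∈ C ∧ ν (x - y) = distNu ν C x := by
  classical
  have hν0 : ν 0 = 0 := (hν_eq 0).mpr rfl
  have hνnn : ∀ z, 0 ≤ ν z := by
    intro z
    have h1 : ν ((-1 : ℝ) • z) = ν z := by rw [hν_smul]; norm_num
    have h2 := hν_add z ((-1 : ℝ) • z)
    simp only [neg_one_smul, add_neg_cancel, hν0] at h2
    rw [show ((-1 : ℝ) • z) = -z by simp] at h1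
    linarith [h2, h1]
  have hνneg : ∀ z, ν (-z) = ν z := by
    intro z
    have h1 : ν ((-1 : ℝ) • z) = ν z := by rw [hν_smul]; norm_num
    simpa using h1
  -- upper bound : ν ≤ M * ‖·‖
  obtain ⟨M, hM0, hM⟩ : ∃ M, 0 < M ∧ ∀ z, ν z ≤ M * ‖z‖ := by
    have hsnn : 0 ≤ ∑ i, ν (EuclideanSpace.single i (1 : ℝ)) :=
      Finset.sum_nonneg fun i _ => hνnn _
    refine ⟨(∑ i, ν (EuclideanSpace.single i (1 : ℝ))) + 1, by linarith, ?_⟩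
    intro z
    have hz : z = ∑ i, z i • EuclideanSpace.single i (1 : ℝ) := by
      have := (EuclideanSpace.basisFun (Fin n) ℝ).sum_repr z
      simp only [EuclideanSpace.basisFun_repr, EuclideanSpace.basisFun_apply] at this
      exact this.symm
    calc ν z = ν (∑ i, z i • EuclideanSpace.single i (1 : ℝ)) := by rw [← hz]
      _ ≤ ∑ i, ν (z i • EuclideanSpace.single i (1 : ℝ)) :=
          Finset.le_sum_of_subadditive ν hν0.le hν_add _ _
      _ = ∑ i, |z i| * ν (EuclideanSpace.single i (1 : ℝ)) := by
          simp [hν_smul]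
      _ ≤ ∑ i, ‖z‖ * ν (EuclideanSpace.single i (1 : ℝ)) := by
          apply Finset.sum_le_sum
          intro i _
          exact mul_le_mul_of_nonneg_right (abs_apply_le_norm z i) (hνnn _)
      _ = (∑ i, ν (EuclideanSpace.single i (1 : ℝ))) * ‖z‖ := by
          rw [← Finset.mul_sum, mul_comm]
      _ ≤ ((∑ i, ν (EuclideanSpace.single i (1 : ℝ))) + 1) * ‖z‖ := by
          apply mul_le_mul_of_nonneg_right _ (norm_nonneg z)
          linarith
  have hνsub : ∀ z w, ν z - ν w ≤ ν (z - w) := by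
    intro z w
    have := hν_add (z - w) w
    simp only [sub_add_cancel] at this
    linarith
  have hνcont : Continuous ν := by
    rw [Metric.continuous_iff]
    intro z ε hε
    refine ⟨ε / M, by positivity, fun w hw => ?_⟩
    rw [Real.dist_eq]
    rw [abs_sub_lt_iff]
    have h1 := hνsub w z
    have h2 := hνsub z w
    have h3 : ν (w - z) ≤ M * ‖w - z‖ := hM _
    have h4 : ν (z - w) ≤ M * ‖z - w‖ := hM _
    have h5 : ‖w - z‖ < ε / M := by rwa [← dist_eq_norm]
    have h6 : ‖z - w‖ < ε / M := by rwa [norm_sub_rev]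
    have h7 : ‖w - z‖ * M < ε := (lt_div_iff₀ hM0).mp h5
    have h8 : ‖z - w‖ * M < ε := (lt_div_iff₀ hM0).mp h6
    constructor <;> nlinarith
  -- basic distNu facts
  have hbdd : ∀ w, BddBelow ((fun y => ν (w - y)) '' C) := by
    intro w; exact ⟨0, by rintro _ ⟨y, hy, rfl⟩; exact hνnn _⟩
  have hdle : ∀ w, ∀ y ∈ C, distNu ν C w ≤ ν (w - y) := by
    intro w y hy
    exact csInf_le (hbdd w) ⟨y, hy, rfl⟩
  have hdge : ∀ w b, (∀ y ∈ C, b ≤ ν (w - y)) → b ≤ distNu ν C w := by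
    intro w b hb
    exact le_csInf (hCne.image _) (by rintro _ ⟨y, hy, rfl⟩; exact hb y hy)
  have hdnn : ∀ w, 0 ≤ distNu ν C w := fun w => hdge w 0 (fun y _ => hνnn _)
  have hlip : ∀ z w, distNu ν C z ≤ distNu ν C w + ν (z - w) := by
    intro z w
    have : distNu ν C z - ν (z - w) ≤ distNu ν C w := by
      apply hdge
      intro y hy
      have h1 : ν (z - y) ≤ ν (z - w) + ν (w - y) := by
        have := hν_add (z - w) (w - y)
        simpa [sub_add_sub_cancel] using this
      have h2 := hdle z y hy
      linarith
    linarith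
  rcases subsingleton_or_nontrivial (EuclideanSpace ℝ (Fin n)) with hsub | hnt
  · obtain ⟨y₀, hy₀⟩ := hCne
    refine ⟨y₀, ⟨hy₀, ?_⟩, fun y _ => Subsingleton.elim y y₀⟩
    have him : ((fun y => ν (x - y)) '' C) = {0} := by
      apply Set.eq_singleton_iff_nonempty_unique_mem.mpr
      refine ⟨⟨_, Set.mem_image_of_mem _ hy₀⟩, ?_⟩
      rintro _ ⟨y, hy, rfl⟩
      simp [Subsingleton.elim (x - y) 0, hν0]
    rw [distNu, him, csInf_singleton]
    simp [Subsingleton.elim (x - y₀) 0, hν0]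
  -- lower bound : c * ‖·‖ ≤ ν
  obtain ⟨c, hc0, hc⟩ : ∃ c, 0 < c ∧ ∀ z, c * ‖z‖ ≤ ν z := by
    have hsne : (Metric.sphere (0 : EuclideanSpace ℝ (Fin n)) 1).Nonempty :=
      NormedSpace.sphere_nonempty.mpr zero_le_one
    obtain ⟨u₀, hu₀s, hu₀min⟩ :=
      (isCompact_sphere (0 : EuclideanSpace ℝ (Fin n)) 1).exists_isMinOn hsne
        hνcont.continuousOn
    have hu₀n : ‖u₀‖ = 1 := by simpa using mem_sphere_zero_iff_norm.mp hu₀s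
    have hu₀pos : 0 < ν u₀ := by
      rcases lt_or_eq_of_le (hνnn u₀) with h | h
      · exact h
      · exfalso
        have : u₀ = 0 := (hν_eq u₀).mp h.symm
        rw [this] at hu₀n; simp at hu₀n
    refine ⟨ν u₀, hu₀pos, fun z => ?_⟩
    rcases eq_or_ne z 0 with rfl | hz
    · simp [hν0]
    · have hzn : ‖z‖ ≠ 0 := norm_ne_zero_iff.mpr hz
      have hmem : (‖z‖⁻¹ • z) ∈ Metric.sphere (0 : EuclideanSpace ℝ (Fin n)) 1 := by
        rw [mem_sphere_zero_iff_norm, norm_smul]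
        simp [abs_of_nonneg (inv_nonneg.mpr (norm_nonneg z)), inv_mul_cancel₀ hzn]
      have h1 : ν u₀ ≤ ν (‖z‖⁻¹ • z) := hu₀min hmem
      rw [hν_smul] at h1
      rw [abs_of_nonneg (inv_nonneg.mpr (norm_nonneg z))] at h1
      have h2 : ‖z‖ * ν u₀ ≤ ‖z‖ * (‖z‖⁻¹ * ν z) :=
        mul_le_mul_of_nonneg_left h1 (norm_nonneg z)
      rw [← mul_assoc, mul_inv_cancel₀ hzn, one_mul] at h2
      linarith [h2]
  -- existence of a best approximation
  obtain ⟨ys, hysC, hysd⟩ : ∃ y ∈ C, ν (x - y) = distNu ν C x := by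
    obtain ⟨y₀, hy₀⟩ := hCne
    set R := (ν (x - y₀) + 1) / c with hR
    have hy₀R : ‖x - y₀‖ ≤ R := by
      rw [hR, le_div_iff₀ hc0]
      have := hc (x - y₀)
      linarith
    have hKcpt : IsCompact (C ∩ Metric.closedBall x R) := by
      exact (isCompact_closedBall x R).inter_left hCcl
    have hKne : (C ∩ Metric.closedBall x R).Nonempty := by
      refine ⟨y₀, hy₀, ?_⟩
      rw [Metric.mem_closedBall, dist_comm, dist_eq_norm]
      exact hy₀R
    obtain ⟨y, ⟨hyC, hyB⟩, hymin⟩ := hKcpt.exists_isMinOn hKne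
      ((hνcont.comp (continuous_const.sub continuous_id)).continuousOn)
    refine ⟨y, hyC, ?_⟩
    apply le_antisymm _ (hdle x y hyC)
    apply hdge
    intro z hz
    rcases le_or_gt (dist x z) R with hzR | hzR
    · exact hymin ⟨hz, by rwa [Metric.mem_closedBall, dist_comm]⟩
    · have h1 : ν (x - y) ≤ ν (x - y₀) :=
        hymin ⟨hy₀, by rw [Metric.mem_closedBall, dist_comm, dist_eq_norm]; exact hy₀R⟩
      have h2 : c * ‖x - z‖ ≤ ν (x - z) := hc _
      have h3 : R < ‖x - z‖ := by rwa [dist_eq_norm] at hzR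
      have h4 : c * R < c * ‖x - z‖ := by exact (mul_lt_mul_iff_right₀ hc0).mpr h3
      rw [hR] at h4
      rw [mul_div_cancel₀ _ (ne_of_gt hc0)] at h4
      linarith
  set d := distNu ν C x with hd
  rcases eq_or_lt_of_le (hdnn x) with hd0 | hdpos
  all_goals rw [← hd] at *
  · -- distance zero : x ∈ C and the unique best approximation is x itself
    have hxys : ys = x := by
      have h1 : ν (x - ys) = 0 := by rw [hysd, ← hd0]
      exact (sub_eq_zero.mp ((hν_eq _).mp h1)).symm
    refine ⟨x, ⟨hxys ▸ hysC, by rw [sub_self, hν0, ← hd0]⟩, ?_⟩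
    rintro y ⟨hyC, hyd⟩
    have h1 : ν (x - y) = 0 := by rw [hyd, ← hd0]
    exact (sub_eq_zero.mp ((hν_eq _).mp h1)).symm
  · -- positive distance : use differentiability
    have ha0 : a ≠ 0 := by linarith
    have hdiff' : DifferentiableAt ℝ (distNu ν C) x := by
      have h1 : DifferentiableAt ℝ (fun z => (distNu ν C z ^ a) ^ a⁻¹) x :=
        hdiff.rpow_const (Or.inl (ne_of_gt (Real.rpow_pos_of_pos hdpos a)))
      apply h1.congr_of_eventuallyEq
      apply Filter.Eventually.of_forall
      intro z
      show distNu ν C z = (distNu ν C z ^ a) ^ a⁻¹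
      rw [← Real.rpow_mul (hdnn z), mul_inv_cancel₀ ha0, Real.rpow_one]
    set L := fderiv ℝ (distNu ν C) x with hLdef
    have hLd : HasFDerivAt (distNu ν C) L x := hdiff'.hasFDerivAt
    have hcurve : ∀ v, HasDerivAt (fun t : ℝ => distNu ν C (x + t • v)) (L v) 0 := by
      intro v
      have h1 : HasDerivAt (fun t : ℝ => x + t • v) v 0 := by
        have := ((hasDerivAt_id (0 : ℝ)).smul_const v).const_add x
        simpa using this
      have h0 : HasFDerivAt (distNu ν C) L ((fun t : ℝ => x + t • v) 0) := by
        show HasFDerivAt _ _ (x + (0 : ℝ) • v)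
        rw [zero_smul, add_zero]
        exact hLd
      have h2 := h0.comp_hasDerivAt 0 h1
      exact h2
    -- the derivative is bounded by ν
    have hLbound : ∀ v, |L v| ≤ ν v := by
      intro v
      have hs := hasDerivAt_iff_tendsto_slope.mp (hcurve v)
      have habs : Tendsto (fun t => |slope (fun t : ℝ => distNu ν C (x + t • v)) 0 t|)
          (𝓝[≠] (0 : ℝ)) (𝓝 |L v|) := hs.abs
      refine le_of_tendsto habs (Filter.Eventually.of_forall fun t => ?_)
      rcases eq_or_ne t 0 with rfl | ht
      · simp [slope_def_field]
        exact hνnn v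
      · have hub : distNu ν C (x + t • v) - distNu ν C x ≤ |t| * ν v := by
          have := hlip (x + t • v) x
          have he : x + t • v - x = t • v := by abel
          rw [he, hν_smul] at this
          linarith
        have hlb : distNu ν C x - distNu ν C (x + t • v) ≤ |t| * ν v := by
          have := hlip x (x + t • v)
          have he : x - (x + t • v) = (-t) • v := by module
          rw [he, hν_smul, abs_neg] at this
          linarith
        rw [slope_def_field, sub_zero, abs_div]
        rw [div_le_iff₀ (abs_pos.mpr ht)]
        calc |distNu ν C (x + t • v) - distNu ν C ((fun t : ℝ => x + t • v) 0)|
            = |distNu ν C (x + t • v) - distNu ν C x| := by norm_num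
          _ ≤ |t| * ν v := abs_sub_le_iff.mpr ⟨hub, hlb⟩
          _ = ν v * |t| := mul_comm _ _
    -- key : derivative along direction of a best approximation
    have hLkey : ∀ y ∈ C, ν (x - y) = d → L (x - y) = d := by
      intro y hyC hyd
      set v := y - x with hv
      have hseg : ∀ t ∈ Icc (0 : ℝ) 1, distNu ν C (x + t • v) = (1 - t) * d := by
        rintro t ⟨ht0, ht1⟩
        apply le_antisymm
        · have h1 := hdle (x + t • v) y hyC
          have h2 : x + t • v - y = (1 - t) • (x - y) := by rw [hv]; module
          rw [h2, hν_smul, abs_of_nonneg (by linarith), hyd] at h1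
          exact h1
        · have h1 := hlip x (x + t • v)
          have h2 : x - (x + t • v) = t • (x - y) := by rw [hv]; module
          rw [h2, hν_smul, abs_of_nonneg ht0, hyd] at h1
          linarith
      have h1 : HasDerivWithinAt (fun t : ℝ => distNu ν C (x + t • v)) (L v)
          (Icc (0 : ℝ) 1) 0 := (hcurve v).hasDerivWithinAt
      have h2 : HasDerivWithinAt (fun t : ℝ => (1 - t) * d) (-d) (Icc (0 : ℝ) 1) 0 := by
        have h3 : HasDerivAt (fun t : ℝ => (1 - t) * d) ((-1) * d) 0 :=
          ((hasDerivAt_id (0 : ℝ)).const_sub 1).mul_const d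
        simpa using h3.hasDerivWithinAt
      have h3 : HasDerivWithinAt (fun t : ℝ => distNu ν C (x + t • v)) (-d)
          (Icc (0 : ℝ) 1) 0 := by
        apply h2.congr
        · intro t ht; exact hseg t ht
        · simpa using hseg 0 ⟨le_refl 0, zero_le_one⟩
      have hud : UniqueDiffWithinAt ℝ (Icc (0 : ℝ) 1) 0 :=
        uniqueDiffOn_Icc zero_lt_one 0 ⟨le_refl 0, zero_le_one⟩
      have h4 : L v = -d := by
        rw [← h1.derivWithin hud, ← h3.derivWithin hud]
      have h5 : x - y = -v := by rw [hv]; abel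
      rw [h5, map_neg, h4, neg_neg]
    refine ⟨ys, ⟨hysC, hysd⟩, ?_⟩
    rintro y ⟨hyC, hyd⟩
    by_contra hne
    have hLy := hLkey y hyC hyd
    have hLys := hLkey ys hysC hysd
    have hdne : d ≠ 0 := ne_of_gt hdpos
    set u₁ := d⁻¹ • (x - y) with hu₁
    set u₂ := d⁻¹ • (x - ys) with hu₂
    have hn1 : ν u₁ = 1 := by
      rw [hu₁, hν_smul, abs_of_pos (inv_pos.mpr hdpos), hyd, inv_mul_cancel₀ hdne]
    have hn2 : ν u₂ = 1 := by
      rw [hu₂, hν_smul, abs_of_pos (inv_pos.mpr hdpos), hysd, inv_mul_cancel₀ hdne]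
    have hune : u₁ ≠ u₂ := by
      intro h
      apply hne
      rw [hu₁, hu₂] at h
      have h2 : x - y = x - ys := smul_right_injective _ (inv_ne_zero hdne) h
      have := sub_right_injective h2
      exact this
    have hsc := hν_sc u₁ u₂ hune hn1 hn2 (1 / 2) (by norm_num) (by norm_num)
    have hLu₁ : L u₁ = 1 := by
      rw [hu₁, map_smul, smul_eq_mul, hLy, inv_mul_cancel₀ hdne]
    have hLu₂ : L u₂ = 1 := by
      rw [hu₂, map_smul, smul_eq_mul, hLys, inv_mul_cancel₀ hdne]
    have hw : L ((1 / 2 : ℝ) • u₁ + (1 - 1 / 2 : ℝ) • u₂) = 1 := by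
      simp only [map_add, map_smul, smul_eq_mul, hu₁, hu₂, hLy, hLys,
        inv_mul_cancel₀ hdne]
      norm_num
    have hb := hLbound ((1 / 2 : ℝ) • u₁ + (1 - 1 / 2 : ℝ) • u₂)
    rw [hw] at hb
    simp only [abs_one] at hb
    linarith
end

section
/- Let ν be a norm on ℝⁿ that is (Fréchet) differentiable at every x ≠ 0. Then the map ∇ν² : ℝⁿ → ℝⁿ, defined as the gradient of x ↦ ν(x)² at x ≠ 0 and as 0 at x = 0, is surjective: every w ∈ ℝⁿ equals ∇ν²(x) for some x ∈ ℝⁿ. -/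
open scoped Classical
open scoped RealInnerProductSpace

/-- If `ν` is a norm on `ℝⁿ` differentiable at every `x ≠ 0`, then the map
`∇ν² : ℝⁿ → ℝⁿ` (the gradient of `x ↦ ν(x)²` at `x ≠ 0`, and `0` at `x = 0`)
is surjective. -/
theorem stmt2 {n : ℕ} (ν : EuclideanSpace ℝ (Fin n) → ℝ)
    (hν_eq : ∀ x, ν x = 0 ↔ x = 0)
    (hν_smul : ∀ (c : ℝ) (x), ν (c • x) = |c| * ν x)
    (hν_add : ∀ x y, ν (x + y) ≤ ν x + ν y)
    (hν_diff : ∀ x : EuclideanSpace ℝ (Fin n), x ≠ 0 → DifferentiableAt ℝ ν x) :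
    Function.Surjective
      (fun x : EuclideanSpace ℝ (Fin n) =>
        if x = 0 then (0 : EuclideanSpace ℝ (Fin n))
        else gradient (fun y => ν y ^ 2) x) := by
  intro w
  by_cases hw : w = 0
  · exact ⟨0, by simp [hw]⟩
  -- basic norm facts
  have hν0 : ν 0 = 0 := (hν_eq 0).2 rfl
  have hνneg : ∀ x : EuclideanSpace ℝ (Fin n), ν (-x) = ν x := by
    intro x
    have := hν_smul (-1) x
    simpa using this
  have hnonneg : ∀ x : EuclideanSpace ℝ (Fin n), 0 ≤ ν x := by
    intro x
    have h := hν_add x (-x)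
    rw [add_neg_cancel, hν0, hνneg] at h
    linarith
  -- upper Lipschitz bound
  have hsum : ∀ (s : Finset (Fin n)) (f : Fin n → EuclideanSpace ℝ (Fin n)),
      ν (∑ i ∈ s, f i) ≤ ∑ i ∈ s, ν (f i) := by
    intro s f
    induction s using Finset.induction with
    | empty => simp [hν0]
    | insert _ _ h ih =>
        rw [Finset.sum_insert h, Finset.sum_insert h]
        exact le_trans (hν_add _ _) (by linarith)
  set C : ℝ := ∑ i, ν (EuclideanSpace.single i (1:ℝ)) with hCdef
  have hC0 : 0 ≤ C := Finset.sum_nonneg fun i _ => hnonneg _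
  have hcoord : ∀ (x : EuclideanSpace ℝ (Fin n)) (i : Fin n), |x i| ≤ ‖x‖ := by
    intro x i
    have h1 : ⟪EuclideanSpace.single i (1:ℝ), x⟫ = x i := by
      simp [EuclideanSpace.inner_single_left]
    calc |x i| = ‖⟪EuclideanSpace.single i (1:ℝ), x⟫‖ := by rw [h1]; exact (Real.norm_eq_abs _).symm
      _ ≤ ‖EuclideanSpace.single i (1:ℝ)‖ * ‖x‖ := abs_real_inner_le_norm _ _
      _ = ‖x‖ := by rw [EuclideanSpace.norm_single]; simp
  have hub : ∀ x : EuclideanSpace ℝ (Fin n), ν x ≤ C * ‖x‖ := by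
    intro x
    have hx : x = ∑ i, x i • EuclideanSpace.single i (1:ℝ) := by
      have := (EuclideanSpace.basisFun (Fin n) ℝ).toBasis.sum_repr x
      simp only [OrthonormalBasis.coe_toBasis_repr_apply, OrthonormalBasis.coe_toBasis] at this
      simp only [EuclideanSpace.basisFun_repr, EuclideanSpace.basisFun_apply] at this
      exact this.symm
    calc ν x = ν (∑ i, x i • EuclideanSpace.single i (1:ℝ)) := by rw [← hx]
      _ ≤ ∑ i, ν (x i • EuclideanSpace.single i (1:ℝ)) := hsum _ _
      _ ≤ ∑ i, ‖x‖ * ν (EuclideanSpace.single i (1:ℝ)) := by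
          apply Finset.sum_le_sum; intro i _
          rw [hν_smul]
          exact mul_le_mul_of_nonneg_right (hcoord x i) (hnonneg _)
      _ = C * ‖x‖ := by rw [← Finset.mul_sum]; ring
  have hlip : ∀ x y : EuclideanSpace ℝ (Fin n), |ν x - ν y| ≤ C * ‖x - y‖ := by
    intro x y
    have h1 : ν x ≤ ν y + ν (x - y) := by
      have := hν_add y (x - y)
      simpa using this
    have h3 : ν (y - x) = ν (x - y) := by
      rw [← hνneg (x - y)]; congr 1; abel
    have h2 : ν y ≤ ν x + ν (x - y) := by
      have := hν_add x (y - x)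
      rw [h3] at this
      simpa using this
    have h4 := hub (x - y)
    rw [abs_le]
    constructor <;> linarith
  have hcont : Continuous ν := by
    apply LipschitzWith.continuous (K := Real.toNNReal C)
    apply LipschitzWith.of_dist_le_mul
    intro x y
    rw [Real.dist_eq, dist_eq_norm, Real.coe_toNNReal C hC0]
    exact hlip x y
  -- lower bound via compactness of the sphere
  have hwn : ‖w‖ ≠ 0 := norm_ne_zero_iff.2 hw
  have hsphne : (Metric.sphere (0:EuclideanSpace ℝ (Fin n)) 1).Nonempty := by
    refine ⟨‖w‖⁻¹ • w, ?_⟩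
    rw [mem_sphere_zero_iff_norm, norm_smul, norm_inv, norm_norm, inv_mul_cancel₀ hwn]
  obtain ⟨x₁, hx₁S, hx₁min⟩ :=
    (isCompact_sphere (0:EuclideanSpace ℝ (Fin n)) 1).exists_isMinOn hsphne hcont.continuousOn
  set c : ℝ := ν x₁ with hcdef
  have hx₁n : ‖x₁‖ = 1 := mem_sphere_zero_iff_norm.1 hx₁S
  have hx₁ : x₁ ≠ 0 := by
    intro h; rw [h] at hx₁n; simp at hx₁n
  have hc0 : 0 < c := by
    rcases lt_or_eq_of_le (hnonneg x₁) with h | h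
    · exact h
    · exact absurd ((hν_eq x₁).1 h.symm) hx₁
  have hlb : ∀ x : EuclideanSpace ℝ (Fin n), c * ‖x‖ ≤ ν x := by
    intro x
    rcases eq_or_ne x 0 with rfl | hx
    · simp [hν0]
    · have hxn : ‖x‖ ≠ 0 := norm_ne_zero_iff.2 hx
      have hxpos : 0 < ‖x‖ := norm_pos_iff.2 hx
      have hmem : ‖x‖⁻¹ • x ∈ Metric.sphere (0:EuclideanSpace ℝ (Fin n)) 1 := by
        rw [mem_sphere_zero_iff_norm, norm_smul, norm_inv, norm_norm, inv_mul_cancel₀ hxn]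
      have h1 : c ≤ ν (‖x‖⁻¹ • x) := isMinOn_iff.mp hx₁min _ hmem
      have h2 : ν (‖x‖⁻¹ • x) = ‖x‖⁻¹ * ν x := by
        rw [hν_smul, abs_of_pos (by positivity)]
      rw [h2] at h1
      calc c * ‖x‖ ≤ (‖x‖⁻¹ * ν x) * ‖x‖ := by nlinarith
        _ = ν x := by field_simp
  -- the function to minimize
  set g : EuclideanSpace ℝ (Fin n) → ℝ := fun y => ν y ^ 2 - ⟪w, y⟫ with hgdef
  have hgcont : Continuous g := by
    exact ((hcont.pow 2)).sub (continuous_const.inner continuous_id)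
  set R : ℝ := (‖w‖ + 1) / c ^ 2 with hRdef
  have hR0 : 0 < R := by positivity
  obtain ⟨x₀, hx₀B, hx₀min⟩ :=
    (isCompact_closedBall (0:EuclideanSpace ℝ (Fin n)) R).exists_isMinOn
      ⟨0, by simp [hR0.le]⟩ hgcont.continuousOn
  have hg0 : g 0 = 0 := by simp [hgdef, hν0]
  have hx₀le0 : g x₀ ≤ 0 := by
    have := isMinOn_iff.mp hx₀min 0 (by simp [hR0.le])
    linarith
  have hglobal : ∀ y, g x₀ ≤ g y := by
    intro y
    by_cases hy : y ∈ Metric.closedBall (0:EuclideanSpace ℝ (Fin n)) R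
    · exact isMinOn_iff.mp hx₀min y hy
    · have hy' : R < ‖y‖ := by
        rw [Metric.mem_closedBall, dist_zero_right, not_le] at hy
        exact hy
      have h1 : ⟪w, y⟫ ≤ ‖w‖ * ‖y‖ := real_inner_le_norm w y
      have h2 : c * ‖y‖ ≤ ν y := hlb y
      have h5 : c ^ 2 * R = ‖w‖ + 1 := by
        rw [hRdef, mul_div_assoc']; exact mul_div_cancel_left₀ _ (by positivity)
      have h8 : c ^ 2 * ‖y‖ ^ 2 ≤ ν y ^ 2 := by
        have h8' := mul_le_mul h2 h2 (by positivity : (0:ℝ) ≤ c * ‖y‖) (hnonneg y)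
        nlinarith [h8']
      have h9' : (c ^ 2 * ‖y‖) * R ≤ (c ^ 2 * ‖y‖) * ‖y‖ :=
        mul_le_mul_of_nonneg_left hy'.le (by positivity)
      have h9 : (‖w‖ + 1) * ‖y‖ ≤ c ^ 2 * ‖y‖ ^ 2 := by
        calc (‖w‖ + 1) * ‖y‖ = (c ^ 2 * ‖y‖) * R := by rw [← h5]; ring
          _ ≤ (c ^ 2 * ‖y‖) * ‖y‖ := h9'
          _ = c ^ 2 * ‖y‖ ^ 2 := by ring
      have h10 : (0:ℝ) ≤ g y := by
        have : g y = ν y ^ 2 - ⟪w, y⟫ := rfl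
        rw [this]
        nlinarith [norm_nonneg y]
      linarith
  -- the minimizer is not 0
  have hνw : 0 < ν w := by
    rcases lt_or_eq_of_le (hnonneg w) with h | h
    · exact h
    · exact absurd ((hν_eq w).1 h.symm) hw
  have hwpos : 0 < ‖w‖ := norm_pos_iff.2 hw
  set t : ℝ := ‖w‖ ^ 2 / (2 * (ν w) ^ 2) with htdef
  have ht : 0 < t := by positivity
  have hgt : g (t • w) < 0 := by
    have h1 : g (t • w) = t ^ 2 * (ν w) ^ 2 - t * ‖w‖ ^ 2 := by
      have hsm : ν (t • w) = t * ν w := by rw [hν_smul, abs_of_pos ht]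
      have hin : ⟪w, t • w⟫ = t * ‖w‖ ^ 2 := by
        rw [real_inner_smul_right, real_inner_self_eq_norm_sq]
      simp only [hgdef, hsm, hin]
      ring
    have h2 : t ^ 2 * (ν w) ^ 2 = t * (‖w‖ ^ 2 / 2) := by
      rw [htdef]; field_simp
    rw [h1, h2]
    nlinarith [mul_pos ht (by positivity : (0:ℝ) < ‖w‖ ^ 2)]
  have hx₀ : x₀ ≠ 0 := by
    intro h
    have h1 := hglobal (t • w)
    rw [h, hg0] at h1
    linarith
  -- compute the gradient at the minimizer
  have hloc : IsLocalMin g x₀ := Filter.Eventually.of_forall hglobal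
  have hdiff2 : DifferentiableAt ℝ (fun y => ν y ^ 2) x₀ := (hν_diff x₀ hx₀).pow 2
  have hinnerdiff : DifferentiableAt ℝ (fun y : EuclideanSpace ℝ (Fin n) => ⟪w, y⟫) x₀ := by
    have : (fun y : EuclideanSpace ℝ (Fin n) => ⟪w, y⟫) = ⇑(innerSL ℝ w) := by
      funext y; simp
    rw [this]
    exact (innerSL ℝ w).differentiableAt
  have hfd0 : fderiv ℝ g x₀ = 0 := hloc.fderiv_eq_zero
  have hfsub : fderiv ℝ g x₀ =
      fderiv ℝ (fun y => ν y ^ 2) x₀ - fderiv ℝ (fun y : EuclideanSpace ℝ (Fin n) => ⟪w, y⟫) x₀ := by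
    rw [hgdef]
    exact fderiv_sub hdiff2 hinnerdiff
  have hfinner : fderiv ℝ (fun y : EuclideanSpace ℝ (Fin n) => ⟪w, y⟫) x₀ = innerSL ℝ w := by
    have : (fun y : EuclideanSpace ℝ (Fin n) => ⟪w, y⟫) = ⇑(innerSL ℝ w) := by
      funext y; simp
    rw [this]
    exact (innerSL ℝ w).fderiv
  have hfeq : fderiv ℝ (fun y => ν y ^ 2) x₀ = innerSL ℝ w := by
    have := hfsub
    rw [hfd0, hfinner] at this
    have h2 : fderiv ℝ (fun y => ν y ^ 2) x₀ - innerSL ℝ w = 0 := this.symm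
    rwa [sub_eq_zero] at h2
  have htd : (InnerProductSpace.toDual ℝ (EuclideanSpace ℝ (Fin n)) w : EuclideanSpace ℝ (Fin n) →L[ℝ] ℝ) = innerSL ℝ w := by
    ext y
    rw [InnerProductSpace.toDual_apply_apply, innerSL_apply_apply]
  have hgrad : HasGradientAt (fun y => ν y ^ 2) w x₀ := by
    rw [hasGradientAt_iff_hasFDerivAt, htd, ← hfeq]
    exact hdiff2.hasFDerivAt
  refine ⟨x₀, ?_⟩
  simp only [hx₀, if_neg, ite_false]
  exact hgrad.gradient
end

section
/- Let ν be a norm on ℝⁿ that is (Fréchet) differentiable at every x ≠ 0 and is also strictly convex. Then the map ∇ν² : ℝⁿ → ℝⁿ, defined as the gradient of x ↦ ν(x)² at x ≠ 0 and as 0 at x = 0, is injective (and hence, combined with surjectivity, a bijection of ℝⁿ onto itself). -/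
open scoped Classical
open scoped RealInnerProductSpace

/-- Strict gradient inequality for a strictly convex differentiable function. -/
lemma grad_strict_ineq {n : ℕ} {F : EuclideanSpace ℝ (Fin n) → ℝ}
    (hF : StrictConvexOn ℝ Set.univ F) {x y : EuclideanSpace ℝ (Fin n)}
    (hd : DifferentiableAt ℝ F x) (hxy : y ≠ x) :
    ⟪gradient F x, y - x⟫ < F y - F x := by
  set v := y - x with hv
  have hv0 : v ≠ 0 := sub_ne_zero.mpr hxy
  set φ : ℝ → ℝ := fun t => F (x + t • v) with hφdef
  have hφsc : StrictConvexOn ℝ Set.univ φ := by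
    refine ⟨convex_univ, fun s _ t _ hst a b ha hb hab => ?_⟩
    have hne : x + s • v ≠ x + t • v := fun h => hst <| by
      have h2 : (s - t) • v = 0 := by rw [sub_smul, add_left_cancel h, sub_self]
      rcases smul_eq_zero.mp h2 with h3 | h3
      · exact sub_eq_zero.mp h3
      · exact absurd h3 hv0
    have key := hF.2 (Set.mem_univ (x + s • v)) (Set.mem_univ (x + t • v)) hne ha hb hab
    have heq : a • (x + s • v) + b • (x + t • v) = x + (a * s + b * t) • v := by
      have h1 : b = 1 - a := by linarith
      subst h1
      module
    calc φ (a * s + b * t) = F (a • (x + s • v) + b • (x + t • v)) := by rw [heq]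
      _ < a * φ s + b * φ t := by simpa using key
  -- derivative of φ at 0
  have hc : HasDerivAt (fun t : ℝ => x + t • v) v 0 := by
    have h1 : HasDerivAt (fun t : ℝ => t • v) ((1:ℝ) • v) 0 :=
      (hasDerivAt_id (0:ℝ)).smul_const v
    simpa using h1.const_add x
  have hL : HasFDerivAt F (fderiv ℝ F x) x := hd.hasFDerivAt
  have hφd : HasDerivAt φ (fderiv ℝ F x v) 0 := by
    have hL' : HasFDerivAt F (fderiv ℝ F x) ((fun t : ℝ => x + t • v) 0) := by
      simpa using hL
    have := hL'.comp_hasDerivAt 0 hc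
    exact this
  have hfd : fderiv ℝ F x = InnerProductSpace.toDual ℝ _ (gradient F x) := by
    have hg := hd.hasGradientAt
    rw [hasGradientAt_iff_hasFDerivAt] at hg
    exact hg.fderiv
  have hinner : fderiv ℝ F x v = ⟪gradient F x, v⟫ := by
    rw [hfd]; simp
  have := hφsc.lt_slope_of_hasDerivAt (Set.mem_univ (0:ℝ)) (Set.mem_univ (1:ℝ))
    zero_lt_one hφd
  rw [hinner] at this
  have hslope : slope φ 0 1 = F y - F x := by
    simp [slope, hφdef, hv]
  rw [hslope] at this
  exact this

/-- If `ν` is a strictly convex norm on `ℝⁿ` differentiable at every `x ≠ 0`, then the map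
`∇ν² : ℝⁿ → ℝⁿ` (the gradient of `x ↦ ν(x)²` at `x ≠ 0`, and `0` at `x = 0`)
is injective (and hence, combined with surjectivity, a bijection of `ℝⁿ` onto itself). -/
theorem stmt3 {n : ℕ} (ν : EuclideanSpace ℝ (Fin n) → ℝ)
    (hν_eq : ∀ x, ν x = 0 ↔ x = 0)
    (hν_smul : ∀ (c : ℝ) (x), ν (c • x) = |c| * ν x)
    (hν_add : ∀ x y, ν (x + y) ≤ ν x + ν y)
    (hν_diff : ∀ x : EuclideanSpace ℝ (Fin n), x ≠ 0 → DifferentiableAt ℝ ν x)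
    (hν_sc : ∀ x y, x ≠ y → ν x = 1 → ν y = 1 →
      ∀ t : ℝ, 0 < t → t < 1 → ν (t • x + (1 - t) • y) < 1) :
    Function.Injective
      (fun x : EuclideanSpace ℝ (Fin n) =>
        if x = 0 then (0 : EuclideanSpace ℝ (Fin n))
        else gradient (fun y => ν y ^ 2) x) := by
  set F : EuclideanSpace ℝ (Fin n) → ℝ := fun y => ν y ^ 2 with hFdef
  have hν0 : ν 0 = 0 := (hν_eq 0).mpr rfl
  have hνneg : ∀ x, ν (-x) = ν x := by
    intro x
    have := hν_smul (-1) x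
    simpa using this
  have hνnn : ∀ x, 0 ≤ ν x := by
    intro x
    have h := hν_add x (-x)
    rw [add_neg_cancel, hν0, hνneg] at h
    linarith
  -- strict convexity of F
  have hFsc : StrictConvexOn ℝ Set.univ F := by
    refine ⟨convex_univ, fun x _ y _ hxy a b ha hb hab => ?_⟩
    have hC : ν (a • x + b • y) ≤ a * ν x + b * ν y := by
      calc ν (a • x + b • y) ≤ ν (a • x) + ν (b • y) := hν_add _ _
        _ = a * ν x + b * ν y := by
            rw [hν_smul, hν_smul, abs_of_pos ha, abs_of_pos hb]
    by_cases hAB : ν x = ν y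
    · -- equal norms case
      by_cases hA0 : ν x = 0
      · exact absurd (((hν_eq x).mp hA0).trans ((hν_eq y).mp (hAB ▸ hA0)).symm) hxy
      · set r := ν x with hr
        have hrpos : 0 < r := lt_of_le_of_ne (hνnn x) (Ne.symm hA0)
        have hx' : ν (r⁻¹ • x) = 1 := by
          rw [hν_smul, abs_of_pos (inv_pos.mpr hrpos)]
          field_simp
          exact hr.symm
        have hy' : ν (r⁻¹ • y) = 1 := by
          rw [hν_smul, abs_of_pos (inv_pos.mpr hrpos), ← hAB]
          field_simp
        have hne' : r⁻¹ • x ≠ r⁻¹ • y := by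
          intro h
          exact hxy (smul_right_injective _ (inv_ne_zero hrpos.ne') h)
        have hb1 : b = 1 - a := by linarith
        have hkey := hν_sc _ _ hne' hx' hy' a ha (by linarith)
        have hcomb : ν (a • x + b • y) < r := by
          have heq2 : a • x + b • y = r • (a • (r⁻¹ • x) + (1 - a) • (r⁻¹ • y)) := by
            rw [smul_add, smul_comm r a, smul_comm r (1-a), smul_inv_smul₀ hrpos.ne',
              smul_inv_smul₀ hrpos.ne', hb1]
          rw [heq2, hν_smul, abs_of_pos hrpos]
          exact (mul_lt_iff_lt_one_right hrpos).mpr hkey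
        have : F (a • x + b • y) < r ^ 2 := by
          have h1 : ν (a • x + b • y) ^ 2 < r ^ 2 := by
            apply pow_lt_pow_left₀ hcomb (hνnn _)
            norm_num
          simpa [hFdef] using h1
        calc F (a • x + b • y) < r ^ 2 := this
          _ = a * F x + b * F y := by
              simp only [hFdef]
              rw [← hAB]
              ring_nf
              nlinarith [hab]
    · -- different norms: use strict convexity of t ↦ t²
      have hsq : StrictConvexOn ℝ Set.univ (fun t : ℝ => t ^ 2) := by
        simpa using Even.strictConvexOn_pow (even_two) (two_ne_zero)
      have h1 : (a * ν x + b * ν y) ^ 2 < a * ν x ^ 2 + b * ν y ^ 2 := by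
        have := hsq.2 (Set.mem_univ (ν x)) (Set.mem_univ (ν y)) hAB ha hb hab
        simpa [smul_eq_mul] using this
      have h2 : ν (a • x + b • y) ^ 2 ≤ (a * ν x + b * ν y) ^ 2 := by
        apply pow_le_pow_left₀ (hνnn _) hC
      calc F (a • x + b • y) = ν (a • x + b • y) ^ 2 := rfl
        _ ≤ (a * ν x + b * ν y) ^ 2 := h2
        _ < a * ν x ^ 2 + b * ν y ^ 2 := h1
        _ = a * F x + b * F y := rfl
  -- differentiability of F at nonzero points
  have hFdiff : ∀ x : EuclideanSpace ℝ (Fin n), x ≠ 0 → DifferentiableAt ℝ F x := by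
    intro x hx
    exact (hν_diff x hx).pow 2
  -- gradient at nonzero point pairs positively with the point
  have hgrad_pos : ∀ x : EuclideanSpace ℝ (Fin n), x ≠ 0 →
      0 < ⟪gradient F x, x⟫ := by
    intro x hx
    have h := grad_strict_ineq hFsc (hFdiff x hx) (Ne.symm hx)
    have hF0 : F 0 = 0 := by simp [hFdef, hν0]
    have hFx : 0 < F x := by
      have : ν x ≠ 0 := fun h => hx ((hν_eq x).mp h)
      have := lt_of_le_of_ne (hνnn x) (Ne.symm this)
      positivity
    rw [hF0, zero_sub, zero_sub, inner_neg_right] at h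
    linarith
  intro x y h
  simp only at h
  by_cases hx : x = 0 <;> by_cases hy : y = 0
  · rw [hx, hy]
  · exfalso
    rw [if_pos hx, if_neg hy] at h
    have := hgrad_pos y hy
    rw [← h] at this
    simp at this
  · exfalso
    rw [if_neg hx, if_pos hy] at h
    have := hgrad_pos x hx
    rw [h] at this
    simp at this
  · rw [if_neg hx, if_neg hy] at h
    by_contra hxy
    have h1 := grad_strict_ineq hFsc (hFdiff x hx) (Ne.symm hxy : y ≠ x)
    have h2 := grad_strict_ineq hFsc (hFdiff y hy) (hxy : x ≠ y)
    rw [h] at h1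
    have : ⟪gradient F y, y - x⟫ + ⟪gradient F y, x - y⟫ = 0 := by
      rw [← inner_add_right]
      simp
    linarith
end

section
/- Let ν be a norm on ℝⁿ, let C ⊆ ℝⁿ be): a nonempty closed set, let f(x) := dist_ν(x, C), and suppose f is (Fréchet) differentiable at a point x ∈ ℝⁿ with x ∉ C. If y⁰ ∈ C is a best ν-approximation of x, then the differential of f at x belongs to the subdifferential of ν at x − y⁰, i.e., Df(x) ∈ ∂ν(x − y⁰). -/
/-- Let `ν` be a norm on `ℝⁿ`, `C` a nonempty closed set, `f := distNu ν C`, and suppose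
`f` is Fréchet differentiable at `x ∉ C`.  If `y⁰ ∈ C` is a best `ν`-approximation of `x`,
then the differential of `f` at `x` belongs to the subdifferential of `ν` at `x − y⁰`,
i.e. `ν y ≥ ν (x - y⁰) + Df(x)(y - (x - y⁰))` for all `y`. -/
theorem stmt6 {n : ℕ} (ν : EuclideanSpace ℝ (Fin n) → ℝ)
    (hν_eq : ∀ x, ν x = 0 ↔ x = 0)
    (hν_smul : ∀ (c : ℝ) (x), ν (c • x) = |c| * ν x)
    (hν_add : ∀ x y, ν (x + y) ≤ ν x + ν y)
    (C : Set (EuclideanSpace ℝ (Fin n))) (hCne : C.Nonempty) (hCcl : IsClosed C)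
    (x : EuclideanSpace ℝ (Fin n)) (hx : x ∉ C)
    (hdiff : DifferentiableAt ℝ (distNu ν C) x)
    (y₀ : EuclideanSpace ℝ (Fin n)) (hy₀ : y₀ ∈ C)
    (hbest : ν (x - y₀) = distNu ν C x) :
    ∀ y : EuclideanSpace ℝ (Fin n),
      ν (x - y₀) + fderiv ℝ (distNu ν C) x (y - (x - y₀)) ≤ ν y := by
  intro y
  -- nonnegativity of ν
  have hν_nonneg : ∀ z, 0 ≤ ν z := by
    intro z
    have h0 : ν (0 : EuclideanSpace ℝ (Fin n)) = 0 := (hν_eq 0).mpr rfl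
    have hneg : ν (-z) = ν z := by
      have := hν_smul (-1) z
      simpa using this
    have := hν_add z (-z)
    simp [h0, hneg] at this
    linarith
  set v := y - (x - y₀) with hv
  set L := fderiv ℝ (distNu ν C) x with hL
  set f := distNu ν C with hf
  -- the curve t ↦ f (x + t • v) has derivative L v at 0
  have hcurve : HasDerivAt (fun t : ℝ => f (x + t • v)) (L v) 0 := by
    have h1 : HasDerivAt (fun t : ℝ => x + t • v) v 0 := by
      simpa using ((hasDerivAt_id (0:ℝ)).smul_const v).const_add x
    have h2 : HasFDerivAt f L x := hdiff.hasFDerivAt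
    have h2' : HasFDerivAt f L (x + (0:ℝ) • v) := by simpa using h2
    exact h2'.comp_hasDerivAt (x := (0:ℝ)) h1
  -- slope bound: for t ∈ (0,1), f (x + t•v) - f x ≤ t * (ν y - ν (x - y₀))
  have hbound : ∀ t : ℝ, 0 < t → t < 1 →
      (f (x + t • v) - f (x + (0:ℝ) • v)) / t ≤ ν y - ν (x - y₀) := by
    intro t ht ht1
    have hkey : f (x + t • v) ≤ ν (x + t • v - y₀) := by
      have hmem : ν (x + t • v - y₀) ∈ (fun z => ν (x + t • v - z)) '' C :=
        ⟨y₀, hy₀, rfl⟩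
      have hbdd : BddBelow ((fun z => ν (x + t • v - z)) '' C) :=
        ⟨0, fun a ⟨z, _, hz⟩ => hz ▸ hν_nonneg _⟩
      exact csInf_le hbdd hmem
    have heq : x + t • v - y₀ = (1 - t) • (x - y₀) + t • y := by
      simp only [hv]
      module
    have hconv : ν (x + t • v - y₀) ≤ (1 - t) * ν (x - y₀) + t * ν y := by
      rw [heq]
      calc ν ((1 - t) • (x - y₀) + t • y) ≤ ν ((1-t) • (x - y₀)) + ν (t • y) := hν_add _ _
        _ = (1 - t) * ν (x - y₀) + t * ν y := by
            rw [hν_smul, hν_smul, abs_of_nonneg (by linarith), abs_of_nonneg ht.le]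
    have hf0 : f (x + (0:ℝ) • v) = ν (x - y₀) := by
      simp [hf, hbest]
    rw [hf0, div_le_iff₀ ht]
    have := hkey.trans hconv
    nlinarith
  -- take the limit
  have hslope : Filter.Tendsto (fun t : ℝ => (f (x + t • v) - f (x + (0:ℝ) • v)) / t)
      (nhdsWithin 0 (Set.Ioi 0)) (nhds (L v)) := by
    have := hasDerivAt_iff_tendsto_slope.mp hcurve
    have h2 := this.mono_left (nhdsWithin_mono 0 (fun a (ha : a ∈ Set.Ioi (0:ℝ)) =>
      ne_of_gt ha : Set.Ioi (0:ℝ) ⊆ {(0:ℝ)}ᶜ))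
    refine h2.congr' ?_
    filter_upwards [self_mem_nhdsWithin] with t ht
    simp [slope, ht, div_eq_inv_mul]
  have hle : L v ≤ ν y - ν (x - y₀) := by
    refine le_of_tendsto hslope ?_
    filter_upwards [Ioo_mem_nhdsGT_of_mem (by norm_num : (0:ℝ) ∈ Set.Ico 0 1)] with t ht
    exact hbound t ht.1 ht.2
  linarith
end

section
/- Let C := {(t, t) : t ∈ ℝ} ⊆ ℝ² and let ‖·‖₁ denote the ℓ¹ norm ‖(x₁, x₂)‖₁ = |x₁| + |x₂| on ℝ². Then for every x = (x₁, x₂) ∈ ℝ²: (i) dist_{‖·‖₁}(x, C) = |x₁ − x₂|; (ii) a point z ∈ C is a best ‖·‖₁-approximation of x if and only if z lies on the segment {s(x₁, x₁) + (1 − s)(x₂, x₂) : s ∈ [0, 1]}. Consequently, the function x ↦ dist_{‖·‖₁}(x, C) is differentiable at every x ∈ ℝ² \ C, yet no x ∈ ℝ² \ C has a unique best ‖·‖₁-approximation in C. -/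
/-- Let `C = {(t,t) : t ∈ ℝ} ⊆ ℝ²` and `ν = ‖·‖₁`.  Then (i) `distNu ν C x = |x₀ − x₁|`;
(ii) `z ∈ C` is a best `ν`-approximation of `x` iff `z` lies on the segment from
`(x₀,x₀)` to `(x₁,x₁)`.  Consequently `distNu ν C` is differentiable at every
`x ∈ ℝ² \ C`, yet no `x ∈ ℝ² \ C` has a unique best `ν`-approximation in `C`. -/
theorem stmt16 (C : Set (Fin 2 → ℝ))
    (hC : C = {z | ∃ t : ℝ, z = fun _ => t})
    (ν : (Fin 2 → ℝ) → ℝ)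
    (hν : ν = fun z => |z 0| + |z 1|) :
    (∀ x : Fin 2 → ℝ, distNu ν C x = |x 0 - x 1|) ∧
    (∀ x : Fin 2 → ℝ, ∀ z ∈ C,
      (ν (x - z) = distNu ν C x ↔
        ∃ s : ℝ, s ∈ Set.Icc (0 : ℝ) 1 ∧
          z = s • (fun _ => x 0 : Fin 2 → ℝ) + (1 - s) • (fun _ => x 1 : Fin 2 → ℝ))) ∧
    (∀ x : Fin 2 → ℝ, x ∉ C → DifferentiableAt ℝ (distNu ν C) x) ∧
    (∀ x : Fin 2 → ℝ, x ∉ C → ¬ ∃! z, z ∈ C ∧ ν (x - z) = distNu ν C x) := by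
  subst hC hν
  -- Part (i)
  have key : ∀ x : Fin 2 → ℝ,
      distNu (fun z => |z 0| + |z 1|) {z | ∃ t : ℝ, z = fun _ => t} x = |x 0 - x 1| := by
    intro x
    unfold distNu
    apply le_antisymm
    · apply csInf_le
      · refine ⟨0, ?_⟩
        rintro r ⟨y, -, rfl⟩
        positivity
      · refine ⟨fun _ => x 1, ⟨x 1, rfl⟩, ?_⟩
        simp [abs_sub_comm]
    · apply le_csInf
      · exact ⟨_, ⟨fun _ => x 1, ⟨x 1, rfl⟩, rfl⟩⟩
      · rintro r ⟨y, ⟨t, rfl⟩, rfl⟩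
        simp only [Pi.sub_apply]
        calc |x 0 - x 1| ≤ |x 0 - t| + |t - x 1| := abs_sub_le _ _ _
          _ = |x 0 - t| + |x 1 - t| := by rw [abs_sub_comm t]
  -- Part (ii)
  have part2 : ∀ x : Fin 2 → ℝ, ∀ z ∈ {z : Fin 2 → ℝ | ∃ t : ℝ, z = fun _ => t},
      ((fun z : Fin 2 → ℝ => |z 0| + |z 1|) (x - z) =
          distNu (fun z => |z 0| + |z 1|) {z | ∃ t : ℝ, z = fun _ => t} x ↔
        ∃ s : ℝ, s ∈ Set.Icc (0 : ℝ) 1 ∧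
          z = s • (fun _ => x 0 : Fin 2 → ℝ) + (1 - s) • (fun _ => x 1 : Fin 2 → ℝ)) := by
    intro x z hz
    obtain ⟨t, rfl⟩ := hz
    rw [key x]
    simp only [Pi.sub_apply]
    have heq : ∀ s : ℝ, ((fun _ => t : Fin 2 → ℝ) =
        s • (fun _ => x 0 : Fin 2 → ℝ) + (1 - s) • (fun _ => x 1 : Fin 2 → ℝ)) ↔
        t = s * x 0 + (1 - s) * x 1 := by
      intro s
      constructor
      · intro h
        have := congrFun h 0
        simpa using this
      · intro h
        funext i
        simp [Pi.smul_apply, smul_eq_mul, h]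
    constructor
    · intro h
      have A := le_abs_self (x 0 - t)
      have A' := neg_abs_le (x 0 - t)
      have B := le_abs_self (x 1 - t)
      have B' := neg_abs_le (x 1 - t)
      rcases lt_trichotomy (x 0) (x 1) with hlt | heq' | hgt
      · have habs : |x 0 - x 1| = x 1 - x 0 := by rw [abs_sub_comm]; exact abs_of_pos (by linarith)
        rw [habs] at h
        have h1 : x 0 ≤ t := by linarith
        have h2 : t ≤ x 1 := by linarith
        refine ⟨(x 1 - t) / (x 1 - x 0), ⟨div_nonneg (by linarith) (by linarith),
          (div_le_one (by linarith)).2 (by linarith)⟩, ?_⟩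
        rw [heq]
        have hd : x 1 - x 0 ≠ 0 := by linarith
        field_simp
        ring
      · have : t = x 0 := by
          rw [heq'] at h ⊢
          have : |x 1 - t| = 0 := by
            have := abs_nonneg (x 1 - t)
            have := abs_nonneg (x 1 - x 1)
            simp at h ⊢
            linarith [abs_nonneg (x 1 - t), h]
          have := abs_eq_zero.mp this
          linarith
        exact ⟨1, ⟨zero_le_one, le_refl 1⟩, by rw [heq]; rw [this]; ring⟩
      · have habs : |x 0 - x 1| = x 0 - x 1 := abs_of_pos (by linarith)
        rw [habs] at h
        have h1 : x 1 ≤ t := by linarith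
        have h2 : t ≤ x 0 := by linarith
        refine ⟨(t - x 1) / (x 0 - x 1), ⟨div_nonneg (by linarith) (by linarith),
          (div_le_one (by linarith)).2 (by linarith)⟩, ?_⟩
        rw [heq]
        have hd : x 0 - x 1 ≠ 0 := by linarith
        field_simp
        ring
    · rintro ⟨s, ⟨hs0, hs1⟩, hzeq⟩
      have ht : t = s * x 0 + (1 - s) * x 1 := (heq s).1 hzeq
      have e1 : x 0 - t = (1 - s) * (x 0 - x 1) := by rw [ht]; ring
      have e2 : x 1 - t = s * (x 1 - x 0) := by rw [ht]; ring
      rw [e1, e2, abs_mul, abs_mul, abs_of_nonneg (by linarith : (0:ℝ) ≤ 1 - s),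
        abs_of_nonneg hs0, abs_sub_comm (x 1)]
      ring
  refine ⟨key, part2, ?_, ?_⟩
  · -- differentiability
    intro x hx
    have hne : x 0 - x 1 ≠ 0 := by
      intro h
      apply hx
      refine ⟨x 0, funext fun i => ?_⟩
      fin_cases i
      · rfl
      · show x 1 = x 0
        linarith
    have hfun : distNu (fun z => |z 0| + |z 1|) {z | ∃ t : ℝ, z = fun _ => t} =
        fun y : Fin 2 → ℝ => |y 0 - y 1| := funext key
    rw [hfun]
    have h1 : DifferentiableAt ℝ (fun y : Fin 2 → ℝ => y 0 - y 1) x :=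
      ((ContinuousLinearMap.proj (R := ℝ) (φ := fun _ : Fin 2 => ℝ) 0).differentiableAt).sub
        ((ContinuousLinearMap.proj (R := ℝ) (φ := fun _ : Fin 2 => ℝ) 1).differentiableAt)
    exact ((differentiableAt_abs hne).comp x h1 : _)
  · -- non-uniqueness
    intro x hx
    have hne : x 0 ≠ x 1 := by
      intro h
      apply hx
      refine ⟨x 0, funext fun i => ?_⟩
      fin_cases i
      · rfl
      · show x 1 = x 0
        linarith
    rintro ⟨z, -, huniq⟩
    have h1 : (fun _ => x 0 : Fin 2 → ℝ) = z := by
      apply huniq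
      refine ⟨⟨x 0, rfl⟩, ?_⟩
      rw [part2 x _ ⟨x 0, rfl⟩]
      exact ⟨1, ⟨zero_le_one, le_refl 1⟩, by funext i; simp⟩
    have h2 : (fun _ => x 1 : Fin 2 → ℝ) = z := by
      apply huniq
      refine ⟨⟨x 1, rfl⟩, ?_⟩
      rw [part2 x _ ⟨x 1, rfl⟩]
      exact ⟨0, ⟨le_refl 0, zero_le_one⟩, by funext i; simp⟩
    have : x 0 = x 1 := by
      have := h1.trans h2.symm
      exact congrFun this 0
    exact hne this
end

section
/- Let ν be a norm on ℝⁿ that is (Fréchet) differentiable at every x ≠ 0. Then for every w ∈ ℝⁿ with w ≠ 0 there exist a real number a > 0 and a point x ∈ ℝⁿ with ν(x) = 1 such that the gradient of ν at x equals a·w; that is, every nonzero vector is a positive multiple of the gradient of ν at some unit vector of ν. -/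
open scoped RealInnerProductSpace


/-- Let `ν` be a norm on `ℝⁿ` that is Fréchet differentiable at every `x ≠ 0`.  Then
every nonzero `w ∈ ℝⁿ` is a positive multiple of the gradient of `ν` at some `ν`-unit
vector: there exist `a > 0` and `x` with `ν(x) = 1` and `∇ν(x) = a • w`. -/
theorem stmt17 {n : ℕ} (ν : EuclideanSpace ℝ (Fin n) → ℝ)
    (hν_eq : ∀ x, ν x = 0 ↔ x = 0)
    (hν_smul : ∀ (c : ℝ) (x), ν (c • x) = |c| * ν x)
    (hν_add : ∀ x y, ν (x + y) ≤ ν x + ν y)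
    (hν_diff : ∀ x : EuclideanSpace ℝ (Fin n), x ≠ 0 → DifferentiableAt ℝ ν x) :
    ∀ w : EuclideanSpace ℝ (Fin n), w ≠ 0 →
      ∃ a : ℝ, 0 < a ∧ ∃ x : EuclideanSpace ℝ (Fin n), ν x = 1 ∧
        gradient ν x = a • w := by
  intro w hw

  -- ν is positive on nonzero vectors
  have hpos : ∀ x : EuclideanSpace ℝ (Fin n), x ≠ 0 → 0 < ν x := by
    intro x hx
    have hneg : ν (-x) = ν x := by
      have := hν_smul (-1) x; simpa using this
    have h0 : ν 0 = 0 := (hν_eq 0).mpr rfl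
    have : (0:ℝ) ≤ ν x + ν x := by
      have := hν_add x (-x); simp [hneg, h0] at this; linarith
    rcases lt_or_eq_of_le (by linarith : (0:ℝ) ≤ ν x) with h | h
    · exact h
    · exact absurd ((hν_eq x).mp h.symm) hx
  -- the Euclidean unit sphere
  set S : Set (EuclideanSpace ℝ (Fin n)) := Metric.sphere (0:EuclideanSpace ℝ (Fin n)) 1 with hS
  have hSne : S.Nonempty := ⟨‖w‖⁻¹ • w, by
    simp [hS, norm_smul, norm_ne_zero_iff.mpr hw, inv_mul_cancel₀ (norm_ne_zero_iff.mpr hw)]⟩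
  have hSne0 : ∀ x ∈ S, x ≠ 0 := by
    intro x hx h0
    rw [hS, mem_sphere_iff_norm] at hx
    simp [h0] at hx
  -- maximize φ on S
  set φ : EuclideanSpace ℝ (Fin n) → ℝ := fun x => ⟪w, x⟫ / ν x with hφ
  have hφcont : ContinuousOn φ S := by
    apply ContinuousOn.div
    · exact (continuous_const.inner continuous_id).continuousOn
    · intro x hx
      exact ((hν_diff x (hSne0 x hx)).continuousAt).continuousWithinAt
    · intro x hx
      exact (hpos x (hSne0 x hx)).ne'
  obtain ⟨x₁, hx₁S, hmax⟩ := (isCompact_sphere (0:EuclideanSpace ℝ (Fin n)) 1).exists_isMaxOn hSne hφcont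
  set M : ℝ := φ x₁ with hM
  have hx₁ne : x₁ ≠ 0 := hSne0 x₁ hx₁S
  have hMpos : 0 < M := by
    have hmem : ‖w‖⁻¹ • w ∈ S := by
      simp [hS, norm_smul, inv_mul_cancel₀ (norm_ne_zero_iff.mpr hw)]
    have hww : (0:ℝ) < ⟪w, w⟫ := by
      rw [real_inner_self_eq_norm_mul_norm]
      exact mul_pos (norm_pos_iff.mpr hw) (norm_pos_iff.mpr hw)
    have h1 : 0 < φ (‖w‖⁻¹ • w) := by
      apply div_pos
      · rw [real_inner_smul_right]
        exact mul_pos (inv_pos.mpr (norm_pos_iff.mpr hw)) hww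
      · exact hpos _ (hSne0 _ hmem)
    exact h1.trans_le (hmax hmem)
  -- global inequality ⟪w,y⟫ ≤ M * ν y
  have hineq : ∀ y : EuclideanSpace ℝ (Fin n), ⟪w, y⟫ ≤ M * ν y := by
    intro y
    rcases eq_or_ne y 0 with rfl | hy
    · simp [(hν_eq 0).mpr rfl]
    · have hyn : (0:ℝ) < ‖y‖ := norm_pos_iff.mpr hy
      have hmem : ‖y‖⁻¹ • y ∈ S := by
        simp [hS, norm_smul, abs_of_pos (inv_pos.mpr hyn), inv_mul_cancel₀ hyn.ne']
      have hle := hmax hmem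
      have hnuy : ν (‖y‖⁻¹ • y) = ‖y‖⁻¹ * ν y := by
        rw [hν_smul]; rw [abs_of_pos (inv_pos.mpr hyn)]
      have hnuypos : 0 < ν (‖y‖⁻¹ • y) := hpos _ (hSne0 _ hmem)
      rw [hφ] at hle
      have := (div_le_iff₀ hnuypos).mp hle
      rw [real_inner_smul_right, hnuy] at this
      calc ⟪w, y⟫ = ‖y‖ * (‖y‖⁻¹ * ⟪w, y⟫) := by field_simp
        _ ≤ ‖y‖ * (M * (‖y‖⁻¹ * ν y)) := by
            apply mul_le_mul_of_nonneg_left this hyn.le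
        _ = M * ν y := by field_simp
  have heq : ⟪w, x₁⟫ = M * ν x₁ := by
    rw [hM, hφ]
    exact (div_mul_cancel₀ _ (hpos x₁ hx₁ne).ne').symm
  -- f has a local min at x₁
  set f : EuclideanSpace ℝ (Fin n) → ℝ := fun y => M * ν y - ⟪w, y⟫ with hf
  have hlocmin : IsLocalMin f x₁ := by
    apply IsMinOn.isLocalMin (s := Set.univ) _ (Filter.univ_mem)
    intro y _
    show f x₁ ≤ f y
    simp only [hf]
    have h1 := hineq y
    linarith [heq]
  have hdiff : DifferentiableAt ℝ f x₁ := by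
    apply DifferentiableAt.sub
    · exact (hν_diff x₁ hx₁ne).const_mul M
    · exact (differentiable_const w).inner ℝ differentiable_id |>.differentiableAt
  have hfderiv0 : fderiv ℝ f x₁ = 0 := hlocmin.fderiv_eq_zero
  -- compute: M • fderiv ν x₁ = innerSL ℝ w
  have hinner : HasFDerivAt (fun y : EuclideanSpace ℝ (Fin n) => ⟪w, y⟫) (innerSL ℝ w) x₁ :=
    (innerSL ℝ w).hasFDerivAt
  have hνd : HasFDerivAt ν (fderiv ℝ ν x₁) x₁ := (hν_diff x₁ hx₁ne).hasFDerivAt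
  have hcomb : HasFDerivAt f (M • fderiv ℝ ν x₁ - innerSL ℝ w) x₁ :=
    (hνd.const_smul M).sub hinner
  have hkey : M • fderiv ℝ ν x₁ - innerSL ℝ w = 0 := by
    rw [← hcomb.fderiv]; exact hfderiv0
  have hfν : fderiv ℝ ν x₁ = M⁻¹ • (innerSL ℝ w) := by
    have : M • fderiv ℝ ν x₁ = innerSL ℝ w := by
      rwa [sub_eq_zero] at hkey
    rw [← this, smul_smul, inv_mul_cancel₀ hMpos.ne', one_smul]
  have hgradx₁ : gradient ν x₁ = M⁻¹ • w := by
    have : HasGradientAt ν (M⁻¹ • w) x₁ := by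
      rw [hasGradientAt_iff_hasFDerivAt]
      refine hνd.congr_fderiv ?_
      rw [hfν]
      ext v
      simp [InnerProductSpace.toDual_apply_apply, real_inner_smul_left]
    exact this.gradient
  -- rescale x₁ to ν-unit
  set c : ℝ := (ν x₁)⁻¹ with hc
  have hcpos : 0 < c := inv_pos.mpr (hpos x₁ hx₁ne)
  set x : EuclideanSpace ℝ (Fin n) := c • x₁ with hx
  have hxν : ν x = 1 := by
    rw [hx, hν_smul, abs_of_pos hcpos, hc, inv_mul_cancel₀ (hpos x₁ hx₁ne).ne']
  have hxne : x ≠ 0 := by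
    intro h0
    have h1 := (hν_eq x).mpr h0
    rw [hxν] at h1
    norm_num at h1
  -- gradient is invariant under positive scaling
  have hfderiv_scale : fderiv ℝ ν x = fderiv ℝ ν x₁ := by
    have hxd : HasFDerivAt ν (fderiv ℝ ν x) x := (hν_diff x hxne).hasFDerivAt
    have hA : HasFDerivAt (fun z : EuclideanSpace ℝ (Fin n) => c • z) (c • ContinuousLinearMap.id ℝ (EuclideanSpace ℝ (Fin n))) x₁ :=
      (hasFDerivAt_id x₁).const_smul c
    have hcomp : HasFDerivAt (fun z : EuclideanSpace ℝ (Fin n) => ν (c • z))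
        ((fderiv ℝ ν x).comp (c • ContinuousLinearMap.id ℝ (EuclideanSpace ℝ (Fin n)))) x₁ := hxd.comp x₁ hA
    have hscaled : HasFDerivAt (fun z : EuclideanSpace ℝ (Fin n) => ν (c • z)) (c • fderiv ℝ ν x₁) x₁ := by
      have : (fun z : EuclideanSpace ℝ (Fin n) => ν (c • z)) = fun z : EuclideanSpace ℝ (Fin n) => c • ν z := by
        funext z; rw [hν_smul, abs_of_pos hcpos]; rfl
      rw [this]
      exact hνd.const_smul c
    have huniq := hcomp.unique hscaled
    ext v
    have := DFunLike.congr_fun huniq v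
    simp only [ContinuousLinearMap.coe_comp', Function.comp_apply,
      ContinuousLinearMap.smul_apply, ContinuousLinearMap.coe_smul',
      Pi.smul_apply, ContinuousLinearMap.coe_id', id_eq] at this
    have h2 : c * (fderiv ℝ ν x) v = c * (fderiv ℝ ν x₁) v := by
      simpa [map_smul, smul_eq_mul] using this
    exact mul_left_cancel₀ hcpos.ne' h2
  have hgradx : gradient ν x = M⁻¹ • w := by
    rw [gradient, hfderiv_scale, ← gradient, hgradx₁]
  exact ⟨M⁻¹, inv_pos.mpr hMpos, x, hxν, hgradx⟩
end
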